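/- Let H : ℝ → ℝ be nondecreasing and right-continuous with Lebesgue–Stieltjes measure μ_H, let a : ℝ → ℝ be continuous with A(u) = ∫_0^u a(s) ds, and define γ : ℝ → ℝ by γ(s) = (A(H(s)) − A(H(s⁻)))/(H(s) − H(s⁻)) if H(s) ≠ H(s⁻) and γ(s) = a(H(s)) otherwise. Then for all real t ≤ T, ∫_{(t, T]} γ(s) dμ_H(s) = A(H(T)) − A(H(t)). -/

import Mathlib

open MeasureTheory Set Function Filter

namespace StieltjesChainRuleAux

/-- The set whose infimum defines the (truncated) generalized inverse of `H`. -/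
def S (H : StieltjesFunction ℝ) (t T u : ℝ) : Set ℝ :=
  (Set.Icc t T ∩ {s | u ≤ H s}) ∪ {T}

/-- Truncated generalized inverse of `H`. -/
noncomputable def K (H : StieltjesFunction ℝ) (t T : ℝ) (u : ℝ) : ℝ :=
  sInf (S H t T u)

lemma isClosed_le_H (H : StieltjesFunction ℝ) (u : ℝ) : IsClosed {s : ℝ | u ≤ H s} := by
  rw [← isOpen_compl_iff, isOpen_iff_mem_nhds]
  intro s0 hs0
  simp only [mem_compl_iff, mem_setOf_eq, not_le] at hs0
  have h1 : ∀ᶠ s in nhdsWithin s0 (Ici s0), H s < u :=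
    (H.right_continuous s0).eventually_lt_const hs0
  rw [eventually_nhdsWithin_iff] at h1
  rcases eventually_nhds_iff.1 h1 with ⟨V, hV, hVopen, hs0V⟩
  rcases Metric.isOpen_iff.1 hVopen s0 hs0V with ⟨ε, hε, hball⟩
  have : Iio (s0 + ε) ⊆ {s : ℝ | u ≤ H s}ᶜ := by
    intro s hs
    simp only [mem_compl_iff, mem_setOf_eq, not_le]
    rcases le_or_gt s s0 with h | h
    · exact lt_of_le_of_lt (H.mono h) hs0
    · have hsV : s ∈ V := hball (by
        simp only [Metric.mem_ball, Real.dist_eq, abs_of_pos (sub_pos.2 h)]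
        simpa [sub_lt_iff_lt_add'] using hs)
      exact hV s hsV h.le
  exact Filter.mem_of_superset (Iio_mem_nhds (by linarith)) this

variable {H : StieltjesFunction ℝ} {t T : ℝ}

lemma S_nonempty (u : ℝ) : (S H t T u).Nonempty := ⟨T, Or.inr rfl⟩

lemma S_bddBelow (htT : t ≤ T) (u : ℝ) : BddBelow (S H t T u) := by
  refine ⟨t, fun s hs => ?_⟩
  rcases hs with ⟨hs, _⟩ | hs
  · exact hs.1
  · simp only [mem_singleton_iff] at hs; exact hs ▸ htT

lemma K_mem_S (htT : t ≤ T) (u : ℝ) : K H t T u ∈ S H t T u := by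
  apply IsClosed.csInf_mem _ (S_nonempty u) (S_bddBelow htT u)
  exact (isClosed_Icc.inter (isClosed_le_H H u)).union isClosed_singleton

lemma K_mem_Icc (htT : t ≤ T) (u : ℝ) : K H t T u ∈ Set.Icc t T := by
  rcases K_mem_S htT u with ⟨h, _⟩ | h
  · exact h
  · simp only [mem_singleton_iff] at h; rw [h]; exact right_mem_Icc.2 htT

lemma le_H_K (htT : t ≤ T) {u : ℝ} (huT : u ≤ H T) : u ≤ H (K H t T u) := by
  rcases K_mem_S htT u with ⟨_, h⟩ | h
  · exact h
  · simp only [mem_singleton_iff] at h; rw [h]; exact huT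

lemma K_le (htT : t ≤ T) {u b : ℝ} (hb : b ∈ Set.Icc t T) (hub : u ≤ H b) :
    K H t T u ≤ b :=
  csInf_le (S_bddBelow htT u) (Or.inl ⟨hb, hub⟩)

lemma H_lt_of_lt_K (htT : t ≤ T) {u s' : ℝ} (ht : t ≤ s') (hs : s' < K H t T u) :
    H s' < u := by
  by_contra h
  push_neg at h
  exact absurd (K_le htT ⟨ht, hs.le.trans (K_mem_Icc htT u).2⟩ h) (not_le.2 hs)

lemma t_lt_K (htT : t ≤ T) {u : ℝ} (hu : H t < u) (huT : u ≤ H T) :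
    t < K H t T u := by
  rcases eq_or_lt_of_le (K_mem_Icc htT u).1 with h | h
  · exact absurd (le_H_K htT huT) (by rw [← h]; exact not_le.2 hu)
  · exact h

lemma K_mono (htT : t ≤ T) : Monotone (K H t T) := by
  intro u1 u2 h
  apply csInf_le_csInf (S_bddBelow htT u1) (S_nonempty u2)
  rintro s (⟨hs1, hs2⟩ | hs)
  · exact Or.inl ⟨hs1, h.trans hs2⟩
  · exact Or.inr hs

lemma K_le_iff (htT : t ≤ T) {u : ℝ} (hu : u ∈ Set.Ioc (H t) (H T)) (b : ℝ) :
    K H t T u ≤ b ↔ u ≤ H (min b T) := by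
  constructor
  · intro h
    exact (le_H_K htT hu.2).trans (H.mono (le_min h (K_mem_Icc htT u).2))
  · intro h
    have htb : t ≤ min b T := by
      by_contra hc
      push_neg at hc
      exact absurd (h.trans (H.mono hc.le)) (not_le.2 hu.1)
    exact (K_le htT ⟨htb, min_le_right _ _⟩ h).trans (min_le_left _ _)

lemma K_measurable (htT : t ≤ T) : Measurable (K H t T) :=
  (K_mono htT).measurable

/-- Pushforward of Lebesgue measure on `(H t, H T]` under `K` is `μ_H` on `(t, T]`. -/
lemma map_K (htT : t ≤ T) :
    (volume.restrict (Set.Ioc (H t) (H T))).map (K H t T)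
      = H.measure.restrict (Set.Ioc t T) := by
  have hK := K_measurable (H := H) htT
  haveI : IsFiniteMeasure (volume.restrict (Set.Ioc (H t) (H T))) := by
    constructor
    rw [Measure.restrict_apply_univ, Real.volume_Ioc]
    exact ENNReal.ofReal_lt_top
  haveI : IsFiniteMeasure ((volume.restrict (Set.Ioc (H t) (H T))).map (K H t T)) :=
    inferInstance
  apply Measure.ext_of_Ioc_finite
  · rw [Measure.map_apply hK MeasurableSet.univ, Set.preimage_univ,
      Measure.restrict_apply_univ, Measure.restrict_apply_univ, Real.volume_Ioc,
      H.measure_Ioc]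
  · intro a b _
    rw [Measure.map_apply hK measurableSet_Ioc, Measure.restrict_apply (hK measurableSet_Ioc),
      Measure.restrict_apply measurableSet_Ioc]
    have hset : K H t T ⁻¹' Set.Ioc a b ∩ Set.Ioc (H t) (H T)
        = Set.Ioc (H (min a T)) (H (min b T)) ∩ Set.Ioc (H t) (H T) := by
      ext u
      simp only [mem_inter_iff, mem_preimage, mem_Ioc, and_congr_left_iff]
      intro hu
      have ha := K_le_iff htT hu a
      have hb := K_le_iff htT hu b
      constructor
      · rintro ⟨h1, h2⟩
        exact ⟨lt_of_not_ge (fun hc => h1.not_ge (ha.2 hc)), hb.1 h2⟩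
      · rintro ⟨h1, h2⟩
        exact ⟨lt_of_not_ge (fun hc => h1.not_ge (ha.1 hc)), hb.2 h2⟩
    rw [hset, Set.Ioc_inter_Ioc, Set.Ioc_inter_Ioc, Real.volume_Ioc, H.measure_Ioc]
    have h1 : min (H (min b T)) (H T) = H (min b T) :=
      min_eq_left (H.mono (min_le_right b T))
    rw [h1]
    rcases le_or_gt a T with haT | haT
    · rw [min_eq_left haT]
      have : max (H a) (H t) = H (max a t) := (H.mono.map_max).symm
      rw [this, max_comm a t]
    · rw [min_eq_right haT.le]
      have h2 : max (H T) (H t) = H T := max_eq_left (H.mono htT)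
      have h3 : max a t = a := max_eq_left (htT.trans haT.le)
      rw [h2, h3]
      have h4 : H (min b T) - H T ≤ 0 := sub_nonpos.2 (H.mono (min_le_right b T))
      have h5 : H (min b T) - H a ≤ 0 :=
        sub_nonpos.2 ((H.mono (min_le_right b T)).trans (H.mono haT.le))
      rw [ENNReal.ofReal_of_nonpos h4, ENNReal.ofReal_of_nonpos h5]

end StieltjesChainRuleAux

open StieltjesChainRuleAux

/-- Generalized chain/substitution rule for Stieltjes integrals: for a nondecreasing
right-continuous `H : ℝ → ℝ` with Lebesgue–Stieltjes measure `μ_H`, a continuous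
`a : ℝ → ℝ` with `A u = ∫_0^u a`, and
`γ s = (A(H s) − A(H s⁻))/(H s − H s⁻)` when `H s ≠ H s⁻`, `γ s = a (H s)` otherwise,
we have `∫_{(t,T]} γ dμ_H = A (H T) − A (H t)` for all `t ≤ T`. -/
theorem stieltjes_chain_rule (H : StieltjesFunction ℝ)
    (a : ℝ → ℝ) (ha : Continuous a)
    (A : ℝ → ℝ) (hA : ∀ u, A u = ∫ s in (0 : ℝ)..u, a s)
    (γ : ℝ → ℝ)
    (hγ : ∀ s, γ s = if H s ≠ Function.leftLim H s
        then (A (H s) - A (Function.leftLim H s)) / (H s - Function.leftLim H s)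
        else a (H s))
    (t T : ℝ) (htT : t ≤ T) :
    ∫ s in Set.Ioc t T, γ s ∂H.measure = A (H T) - A (H t) := by
  have h0 : H t ≤ H T := H.mono htT
  -- measurability facts
  have hHm : Measurable H := H.mono.measurable
  have hlmono : Monotone (Function.leftLim H) := fun x y hxy => by
    rcases eq_or_lt_of_le hxy with h | h
    · rw [h]
    · exact (H.mono.leftLim_le le_rfl).trans (H.mono.le_leftLim h)
  have hlm : Measurable (Function.leftLim H) := hlmono.measurable
  have hAc : Continuous A := by
    have h1 : Continuous fun u => ∫ s in (0:ℝ)..u, a s :=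
      intervalIntegral.continuous_primitive (fun c d => ha.intervalIntegrable c d) 0
    have : A = fun u => ∫ s in (0:ℝ)..u, a s := funext hA
    rw [this]; exact h1
  have hγm : Measurable γ := by
    have : γ = fun s => if H s ≠ Function.leftLim H s
        then (A (H s) - A (Function.leftLim H s)) / (H s - Function.leftLim H s)
        else a (H s) := funext hγ
    rw [this]
    exact Measurable.ite (measurableSet_eq_fun hHm hlm).compl
      (((hAc.measurable.comp hHm).sub (hAc.measurable.comp hlm)).div (hHm.sub hlm))
      (ha.measurable.comp hHm)
  -- uniform bound for γ on (t, T]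
  obtain ⟨M, hM⟩ := IsCompact.exists_bound_of_continuousOn (isCompact_Icc
    (a := H t) (b := H T)) ha.continuousOn
  have hγbound : ∀ s ∈ Set.Ioc t T, ‖γ s‖ ≤ M := by
    intro s hs
    have h1 : H t ≤ Function.leftLim H s := H.mono.le_leftLim hs.1
    have h2 : Function.leftLim H s ≤ H s := H.mono.leftLim_le le_rfl
    have h3 : H s ≤ H T := H.mono hs.2
    rw [hγ s]
    by_cases hj : H s = Function.leftLim H s
    · rw [if_neg (not_not_intro hj)]
      exact hM (H s) ⟨h1.trans h2, h3⟩
    · rw [if_pos hj]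
      have hd : 0 < H s - Function.leftLim H s :=
        sub_pos.2 (lt_of_le_of_ne h2 (Ne.symm hj))
      have key : A (H s) - A (Function.leftLim H s)
          = ∫ x in (Function.leftLim H s)..(H s), a x := by
        rw [hA, hA]
        exact intervalIntegral.integral_interval_sub_left
          (ha.intervalIntegrable _ _) (ha.intervalIntegrable _ _)
      have hb : ‖∫ x in (Function.leftLim H s)..(H s), a x‖
          ≤ M * |H s - Function.leftLim H s| := by
        apply intervalIntegral.norm_integral_le_of_norm_le_const
        intro x hx
        rw [Set.uIoc_of_le h2] at hx
        exact hM x ⟨h1.trans hx.1.le, hx.2.trans h3⟩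
      rw [key] at *
      rw [Real.norm_eq_abs, abs_div, abs_of_pos hd, div_le_iff₀ hd]
      calc |∫ x in (Function.leftLim H s)..(H s), a x|
          ≤ M * |H s - Function.leftLim H s| := hb
        _ = M * (H s - Function.leftLim H s) := by rw [abs_of_pos hd]
  -- step 1 : pushforward
  have step1 : ∫ s in Set.Ioc t T, γ s ∂H.measure
      = ∫ u in Set.Ioc (H t) (H T), γ (K H t T u) := by
    rw [← map_K htT]
    exact integral_map (K_measurable htT).aemeasurable hγm.aestronglyMeasurable
  -- jump set
  set J : Set ℝ := {s | s ∈ Set.Ioc t T ∧ H s ≠ Function.leftLim H s} with hJdef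
  have hJc : J.Countable := by
    apply Set.Countable.mono _ H.countable_leftLim_ne
    intro s hs
    exact Ne.symm hs.2
  haveI := hJc.to_subtype
  set U : Set ℝ := ⋃ s : J, Set.Ioc (Function.leftLim H (s:ℝ)) (H s) with hUdef
  have hUsub : U ⊆ Set.Ioc (H t) (H T) := by
    rintro u hu
    rcases Set.mem_iUnion.1 hu with ⟨⟨s, hs⟩, hu⟩
    exact ⟨lt_of_le_of_lt (H.mono.le_leftLim hs.1.1) hu.1, hu.2.trans (H.mono hs.1.2)⟩
  have hUm : MeasurableSet U := MeasurableSet.iUnion fun s => measurableSet_Ioc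
  have hdisj : Pairwise (Disjoint on fun s : J =>
      Set.Ioc (Function.leftLim H (s:ℝ)) (H (s:ℝ))) := by
    rintro ⟨s1, hs1⟩ ⟨s2, hs2⟩ hne
    have hne' : s1 ≠ s2 := fun h => hne (Subtype.ext h)
    rcases hne'.lt_or_gt with h | h
    · exact (Set.Iic_disjoint_Ioi (H.mono.le_leftLim h)).mono
        Set.Ioc_subset_Iic_self Set.Ioc_subset_Ioi_self
    · exact ((Set.Iic_disjoint_Ioi (H.mono.le_leftLim h)).mono
        Set.Ioc_subset_Iic_self Set.Ioc_subset_Ioi_self).symm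
  -- K equals s on each jump interval
  have hKjump : ∀ s ∈ J, ∀ u ∈ Set.Ioc (Function.leftLim H s) (H s), K H t T u = s := by
    intro s hs u hu
    have h1 : H t ≤ Function.leftLim H s := H.mono.le_leftLim hs.1.1
    have huI : u ∈ Set.Ioc (H t) (H T) :=
      ⟨lt_of_le_of_lt h1 hu.1, hu.2.trans (H.mono hs.1.2)⟩
    have hle : K H t T u ≤ s := K_le htT ⟨hs.1.1.le, hs.1.2⟩ hu.2
    have hge : s ≤ K H t T u := by
      by_contra hc
      push_neg at hc
      have h2 : H (K H t T u) ≤ Function.leftLim H s := H.mono.le_leftLim hc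
      exact absurd ((le_H_K htT huI.2).trans h2) (not_le.2 hu.1)
    exact le_antisymm hle hge
  -- integrability
  have hγKbound : ∀ᵐ u ∂(volume.restrict (Set.Ioc (H t) (H T))), ‖γ (K H t T u)‖ ≤ M := by
    rw [ae_restrict_iff' measurableSet_Ioc]
    filter_upwards with u hu
    exact hγbound _ ⟨t_lt_K htT hu.1 hu.2, (K_mem_Icc htT u).2⟩
  have hγKint : IntegrableOn (fun u => γ (K H t T u)) (Set.Ioc (H t) (H T)) := by
    refine Integrable.mono' (integrable_const M) ?_ hγKbound
    exact ((hγm.comp (K_measurable htT)).aestronglyMeasurable)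
  have haint : IntegrableOn a (Set.Ioc (H t) (H T)) := Continuous.integrableOn_Ioc (μ := volume) ha
  -- splitting lemma
  have hsplit : ∀ f : ℝ → ℝ, IntegrableOn f (Set.Ioc (H t) (H T)) →
      ∫ u in Set.Ioc (H t) (H T), f u
        = (∫ u in Set.Ioc (H t) (H T) \ U, f u) + ∫ u in U, f u := by
    intro f hf
    rw [← setIntegral_union disjoint_sdiff_left hUm
      (hf.mono_set Set.diff_subset) (hf.mono_set hUsub),
      Set.diff_union_of_subset hUsub]
  -- equality off the jump intervals
  have hC : ((Function.leftLim H) '' J).Countable := hJc.image _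
  have hae : ∫ u in Set.Ioc (H t) (H T) \ U, γ (K H t T u)
      = ∫ u in Set.Ioc (H t) (H T) \ U, a u := by
    apply setIntegral_congr_ae (measurableSet_Ioc.diff hUm)
    filter_upwards [hC.ae_notMem volume] with u huC hu
    obtain ⟨huI, huU⟩ := hu
    have hts : t < K H t T u := t_lt_K htT huI.1 huI.2
    have hsT : K H t T u ≤ T := (K_mem_Icc htT u).2
    have hu1 : u ≤ H (K H t T u) := le_H_K htT huI.2
    have hl2 : Function.leftLim H (K H t T u) ≤ u := by
      apply le_of_tendsto (H.mono.tendsto_leftLim (K H t T u))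
      filter_upwards [Ioo_mem_nhdsLT_of_mem (Set.mem_Ioc.2 ⟨hts, le_rfl⟩)] with x hx
      exact (H_lt_of_lt_K htT hx.1.le hx.2).le
    by_cases hj : H (K H t T u) = Function.leftLim H (K H t T u)
    · have he : u = H (K H t T u) := le_antisymm hu1 (hj ▸ hl2)
      rw [hγ (K H t T u), if_neg (not_not_intro hj), ← he]
    · exfalso
      have hsJ : K H t T u ∈ J := ⟨⟨hts, hsT⟩, hj⟩
      rcases eq_or_lt_of_le hl2 with he | hlt
      · exact huC ⟨K H t T u, hsJ, he⟩
      · exact huU (Set.mem_iUnion.2 ⟨⟨K H t T u, hsJ⟩, hlt, hu1⟩)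
  -- equality on the jump intervals
  have hterm : ∀ s : J, (∫ u in Set.Ioc (Function.leftLim H (s:ℝ)) (H (s:ℝ)), γ (K H t T u))
      = ∫ u in Set.Ioc (Function.leftLim H (s:ℝ)) (H (s:ℝ)), a u := by
    rintro ⟨s, hsJ⟩
    have h2 : Function.leftLim H s ≤ H s := H.mono.leftLim_le le_rfl
    have hjump : Function.leftLim H s < H s := lt_of_le_of_ne h2 (Ne.symm hsJ.2)
    have hne : H s - Function.leftLim H s ≠ 0 := ne_of_gt (sub_pos.2 hjump)
    have hKconst : Set.EqOn (fun u => γ (K H t T u)) (fun _ => γ s)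
        (Set.Ioc (Function.leftLim H s) (H s)) := fun u hu => by
      simp only
      rw [hKjump s hsJ u hu]
    rw [setIntegral_congr_fun measurableSet_Ioc hKconst, setIntegral_const,
      Real.volume_real_Ioc_of_le hjump.le, smul_eq_mul,
      hγ s, if_pos hsJ.2, mul_comm, div_mul_cancel₀ _ hne,
      ← intervalIntegral.integral_of_le hjump.le, hA, hA,
      intervalIntegral.integral_interval_sub_left
        (ha.intervalIntegrable _ _) (ha.intervalIntegrable _ _)]
  -- assemble
  have hU2 : (∫ u in U, γ (K H t T u)) = ∫ u in U, a u := by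
    rw [hUdef, integral_iUnion (fun s => measurableSet_Ioc) hdisj (hγKint.mono_set hUsub),
      integral_iUnion (fun s => measurableSet_Ioc) hdisj (haint.mono_set hUsub)]
    exact tsum_congr hterm
  have final : (∫ u in Set.Ioc (H t) (H T), a u) = A (H T) - A (H t) := by
    have : A (H T) - A (H t) = ∫ u in (H t)..(H T), a u := by
      rw [hA, hA]
      exact (intervalIntegral.integral_interval_sub_left
        (ha.intervalIntegrable (μ := volume) _ _) (ha.intervalIntegrable (μ := volume) _ _))
    rw [this, intervalIntegral.integral_of_le h0]
  rw [step1, hsplit _ hγKint, hsplit _ haint, hae, hU2] at *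
  rw [← final]
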